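/- With the setup of the NOMA-equals-OMA power allocation, the total strategy sum satisfies the closed form ∑_{n=1}^K ã_n = (2^{R_1} - 1)/(2^{R_1/τ_1} - 1) + ∑_{l=2}^K [(2^{R_l} - 1)/(2^{R_l/τ_l} - 1)] · ∏_{k=1}^{l-1} 2^{R_k}. -/

import Mathlib

theorem stmt_8 (K : ℕ) (hK : 1 ≤ K) (R τ : ℕ → ℝ)
    (hR : ∀ n ∈ Finset.Icc 1 K, 0 < R n)
    (hτ : ∀ n ∈ Finset.Icc 1 K, 0 < τ n ∧ τ n < 1)
    (hτsum : ∑ n ∈ Finset.Icc 1 K, τ n = 1)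
    (atil : ℕ → ℝ)
    (hatilK : atil K = ((2 : ℝ) ^ (R K) - 1) / ((2 : ℝ) ^ (R K / τ K) - 1))
    (hatil : ∀ n : ℕ, 1 ≤ n → n < K →
      atil n = ((2 : ℝ) ^ (R n) - 1) / ((2 : ℝ) ^ (R n / τ n) - 1) +
        (((2 : ℝ) ^ (R n) - 1) / (2 : ℝ) ^ (R n)) *
          ∑ l ∈ Finset.Icc (n + 1) K,
            (((2 : ℝ) ^ (R l) - 1) / ((2 : ℝ) ^ (R l / τ l) - 1)) *
              ∏ k ∈ Finset.Icc n (l - 1), (2 : ℝ) ^ (R k)) :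
    ∑ n ∈ Finset.Icc 1 K, atil n =
      ((2 : ℝ) ^ (R 1) - 1) / ((2 : ℝ) ^ (R 1 / τ 1) - 1) +
        ∑ l ∈ Finset.Icc 2 K,
          (((2 : ℝ) ^ (R l) - 1) / ((2 : ℝ) ^ (R l / τ l) - 1)) *
            ∏ k ∈ Finset.Icc 1 (l - 1), (2 : ℝ) ^ (R k) := by
  have key : ∀ d n : ℕ, 1 ≤ n → n + d = K →
      ∑ m ∈ Finset.Icc n K, atil m =
        ((2 : ℝ) ^ (R n) - 1) / ((2 : ℝ) ^ (R n / τ n) - 1) +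
          ∑ l ∈ Finset.Icc (n + 1) K,
            (((2 : ℝ) ^ (R l) - 1) / ((2 : ℝ) ^ (R l / τ l) - 1)) *
              ∏ k ∈ Finset.Icc n (l - 1), (2 : ℝ) ^ (R k) := by
    intro d
    induction d with
    | zero =>
      intro n h1 h2
      simp only [Nat.add_zero] at h2
      subst h2
      rw [Finset.Icc_self, Finset.sum_singleton, hatilK,
        Finset.Icc_eq_empty (by omega), Finset.sum_empty, add_zero]
    | succ d ih =>
      intro n h1 h2
      have hnK : n < K := by omega
      have hins : Finset.Icc n K = insert n (Finset.Icc (n + 1) K) := by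
        rw [Finset.Icc_add_one_left_eq_Ioc, Finset.Ioc_insert_left hnK.le]
      rw [hins, Finset.sum_insert (by simp), ih (n + 1) (by omega) (by omega),
        hatil n h1 hnK]
      -- rewrite the product sum S as 2^(R n) * T2
      have hS : (∑ l ∈ Finset.Icc (n + 1) K,
            (((2 : ℝ) ^ (R l) - 1) / ((2 : ℝ) ^ (R l / τ l) - 1)) *
              ∏ k ∈ Finset.Icc n (l - 1), (2 : ℝ) ^ (R k)) =
          (2 : ℝ) ^ (R n) * ∑ l ∈ Finset.Icc (n + 1) K,
            (((2 : ℝ) ^ (R l) - 1) / ((2 : ℝ) ^ (R l / τ l) - 1)) *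
              ∏ k ∈ Finset.Icc (n + 1) (l - 1), (2 : ℝ) ^ (R k) := by
        rw [Finset.mul_sum]
        apply Finset.sum_congr rfl
        intro l hl
        have hl' : n + 1 ≤ l := (Finset.mem_Icc.mp hl).1
        have : Finset.Icc n (l - 1) = insert n (Finset.Icc (n + 1) (l - 1)) := by
          rw [Finset.Icc_add_one_left_eq_Ioc, Finset.Ioc_insert_left (by omega)]
        rw [this, Finset.prod_insert (by simp)]
        ring
      have hT2 : (∑ l ∈ Finset.Icc (n + 1) K,
            (((2 : ℝ) ^ (R l) - 1) / ((2 : ℝ) ^ (R l / τ l) - 1)) *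
              ∏ k ∈ Finset.Icc (n + 1) (l - 1), (2 : ℝ) ^ (R k)) =
          ((2 : ℝ) ^ (R (n + 1)) - 1) / ((2 : ℝ) ^ (R (n + 1) / τ (n + 1)) - 1) +
          ∑ l ∈ Finset.Icc (n + 2) K,
            (((2 : ℝ) ^ (R l) - 1) / ((2 : ℝ) ^ (R l / τ l) - 1)) *
              ∏ k ∈ Finset.Icc (n + 1) (l - 1), (2 : ℝ) ^ (R k) := by
        have hins2 : Finset.Icc (n + 1) K = insert (n + 1) (Finset.Icc (n + 2) K) := by
          have h' : Finset.Icc (n + 2) K = Finset.Ioc (n + 1) K := Finset.Icc_add_one_left_eq_Ioc _ _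
          rw [h', Finset.Ioc_insert_left (by omega)]
        rw [hins2, Finset.sum_insert (by simp)]
        simp [Finset.Icc_eq_empty (show ¬ (n + 1 ≤ n + 1 - 1) by omega)]
      rw [hS, hT2]
      have hc : (2 : ℝ) ^ (R n) ≠ 0 := (Real.rpow_pos_of_pos (by norm_num) _).ne'
      field_simp
      ring
  have := key (K - 1) 1 le_rfl (by omega)
  simpa using this
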